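/- For the SCAD penalty with parameters λ > 0 and a > 2, the function t ↦ ρ_λ(t) + t²/(2(a−1)) is convex on ℝ, and ρ_λ is differentiable on ℝ \ {0} with ρ'_λ(t) = 0 for all t ≥ aλ. -/

import Mathlib

open Set Filter

private lemma scad_glueDeriv {F f g : ℝ → ℝ} {c d : ℝ}
    (hf : HasDerivAt f d c) (hg : HasDerivAt g d c)
    (h1 : ∀ᶠ x in nhds c, x ≤ c → F x = f x)
    (h2 : ∀ᶠ x in nhds c, c ≤ x → F x = g x) :
    HasDerivAt F d c := by
  have hFc : F c = f c := h1.self_of_nhds le_rfl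
  have hFc' : F c = g c := h2.self_of_nhds le_rfl
  have hL : HasDerivWithinAt F d (Iic c) c := by
    refine hf.hasDerivWithinAt.congr_of_eventuallyEq ?_ hFc
    filter_upwards [h1.filter_mono nhdsWithin_le_nhds, self_mem_nhdsWithin] with x hx hx'
    exact hx hx'
  have hR : HasDerivWithinAt F d (Ici c) c := by
    refine hg.hasDerivWithinAt.congr_of_eventuallyEq ?_ hFc'
    filter_upwards [h2.filter_mono nhdsWithin_le_nhds, self_mem_nhdsWithin] with x hx hx'
    exact hx hx'
  have h := hL.union hR
  rw [Iic_union_Ici] at h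
  exact hasDerivWithinAt_univ.mp h

noncomputable def scadH (lam a x : ℝ) : ℝ :=
  if x ≤ lam then lam * x + x ^ 2 / (2 * (a - 1))
  else if x ≤ a * lam then a * lam * x / (a - 1) - lam ^ 2 / (2 * (a - 1))
  else (a + 1) * lam ^ 2 / 2 + x ^ 2 / (2 * (a - 1))

noncomputable def scadH' (lam a x : ℝ) : ℝ :=
  if x ≤ lam then lam + x / (a - 1)
  else if x ≤ a * lam then a * lam / (a - 1)
  else x / (a - 1)

private lemma scadH_hasDerivAt (lam a : ℝ) (hlam : 0 < lam) (ha : 2 < a) (x : ℝ) :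
    HasDerivAt (scadH lam a) (scadH' lam a x) x := by
  have hb : (0 : ℝ) < a - 1 := by linarith
  have hb' : (a : ℝ) - 1 ≠ 0 := ne_of_gt hb
  have hlal : lam < a * lam := by nlinarith
  -- derivatives of the three pieces
  have hf1 : ∀ y : ℝ, HasDerivAt (fun x => lam * x + x ^ 2 / (2 * (a - 1)))
      (lam + y / (a - 1)) y := by
    intro y
    have h : HasDerivAt (fun x : ℝ => lam * x + x ^ 2 / (2 * (a - 1)))
        (lam * 1 + (↑2 * y ^ 1) / (2 * (a - 1))) y :=
      ((hasDerivAt_id y).const_mul lam).add ((hasDerivAt_pow 2 y).div_const _)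
    convert h using 1
    field_simp
  have hf2 : ∀ y : ℝ, HasDerivAt (fun x => a * lam * x / (a - 1) - lam ^ 2 / (2 * (a - 1)))
      (a * lam / (a - 1)) y := by
    intro y
    have h : HasDerivAt (fun x : ℝ => a * lam * x / (a - 1) - lam ^ 2 / (2 * (a - 1)))
        (a * lam * 1 / (a - 1) - 0) y := by
      have h0 := (((hasDerivAt_id y).const_mul (a * lam)).div_const (a - 1)).sub_const
        (lam ^ 2 / (2 * (a - 1)))
      simpa using h0
    convert h using 1
    ring
  have hf3 : ∀ y : ℝ, HasDerivAt (fun x => (a + 1) * lam ^ 2 / 2 + x ^ 2 / (2 * (a - 1)))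
      (y / (a - 1)) y := by
    intro y
    have h : HasDerivAt (fun x : ℝ => (a + 1) * lam ^ 2 / 2 + x ^ 2 / (2 * (a - 1)))
        ((↑2 * y ^ 1) / (2 * (a - 1))) y :=
      ((hasDerivAt_pow 2 y).div_const _).const_add _
    convert h using 1
    field_simp
  -- value matching at the knots
  have hval1 : lam * lam + lam ^ 2 / (2 * (a - 1))
      = a * lam * lam / (a - 1) - lam ^ 2 / (2 * (a - 1)) := by
    field_simp; ring
  have hval2 : a * lam * (a * lam) / (a - 1) - lam ^ 2 / (2 * (a - 1))
      = (a + 1) * lam ^ 2 / 2 + (a * lam) ^ 2 / (2 * (a - 1)) := by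
    field_simp; ring
  rcases lt_trichotomy x lam with h | h | h
  · -- x < lam : first piece
    have hd : scadH' lam a x = lam + x / (a - 1) := if_pos h.le
    rw [hd]
    refine (hf1 x).congr_of_eventuallyEq ?_
    filter_upwards [Iio_mem_nhds h] with y (hy : y < lam)
    simp only [scadH, if_pos hy.le]
  · -- x = lam : glue pieces 1 and 2
    rw [h]
    have hd : scadH' lam a lam = lam + lam / (a - 1) := if_pos le_rfl
    rw [hd]
    have heq : lam + lam / (a - 1) = a * lam / (a - 1) := by
      field_simp; ring
    refine scad_glueDeriv (g := fun x => a * lam * x / (a - 1) - lam ^ 2 / (2 * (a - 1)))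
      (hf1 lam) ?_ ?_ ?_
    · rw [heq]; exact hf2 lam
    · filter_upwards with y hy
      simp only [scadH, if_pos hy]
    · filter_upwards [Iio_mem_nhds hlal] with y (hy : y < a * lam) hxy
      rcases hxy.eq_or_lt with h' | h'
      · rw [← h']
        simp only [scadH, if_pos le_rfl]
        exact hval1
      · simp only [scadH, if_neg (not_le.mpr h'), if_pos hy.le]
  · rcases lt_trichotomy x (a * lam) with h2 | h2 | h2
    · -- lam < x < a*lam : second piece
      have hd : scadH' lam a x = a * lam / (a - 1) := by
        rw [scadH', if_neg (not_le.mpr h), if_pos h2.le]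
      rw [hd]
      refine (hf2 x).congr_of_eventuallyEq ?_
      filter_upwards [Ioo_mem_nhds h h2] with y hy
      simp only [scadH, if_neg (not_le.mpr hy.1), if_pos hy.2.le]
    · -- x = a*lam : glue pieces 2 and 3
      have hd : scadH' lam a x = a * lam / (a - 1) := by
        rw [scadH', if_neg (not_le.mpr h), if_pos h2.le]
      rw [hd]
      refine scad_glueDeriv (g := fun x => (a + 1) * lam ^ 2 / 2 + x ^ 2 / (2 * (a - 1)))
        (hf2 x) ?_ ?_ ?_
      · rw [h2]
        exact hf3 (a * lam)
      · filter_upwards [Ioi_mem_nhds h] with y (hy : lam < y) hxy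
        rw [h2] at hxy
        simp only [scadH, if_neg (not_le.mpr hy), if_pos hxy]
      · filter_upwards [Ioi_mem_nhds h] with y (hy : lam < y) hxy
        rw [h2] at hxy
        rcases hxy.eq_or_lt with h' | h'
        · rw [← h']
          simp only [scadH, if_neg (not_le.mpr hlal), if_pos le_rfl]
          exact hval2
        · simp only [scadH, if_neg (not_le.mpr hy), if_neg (not_le.mpr h')]
    · -- a*lam < x : third piece
      have hd : scadH' lam a x = x / (a - 1) := by
        rw [scadH', if_neg (not_le.mpr h), if_neg (not_le.mpr h2)]
      rw [hd]
      refine (hf3 x).congr_of_eventuallyEq ?_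
      filter_upwards [Ioi_mem_nhds h2] with y (hy : a * lam < y)
      have hy' : lam < y := lt_trans hlal hy
      simp only [scadH, if_neg (not_le.mpr hy'), if_neg (not_le.mpr hy)]

private lemma scadH'_mono (lam a : ℝ) (hlam : 0 < lam) (ha : 2 < a) :
    Monotone (scadH' lam a) := by
  have hb : (0 : ℝ) < a - 1 := by linarith
  intro x y hxy
  have key : ∀ u v : ℝ, u ≤ v → u / (a - 1) ≤ v / (a - 1) := fun u v h => by gcongr
  have hrw : ∀ z : ℝ, lam + z / (a - 1) = (lam * (a - 1) + z) / (a - 1) := by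
    intro z; field_simp
  simp only [scadH']
  rcases le_or_gt x lam with h1 | h1
  · rw [if_pos h1]
    rcases le_or_gt y lam with h2 | h2
    · rw [if_pos h2, hrw, hrw]
      exact key _ _ (by linarith)
    · rw [if_neg (not_le.mpr h2)]
      rcases le_or_gt y (a * lam) with h3 | h3
      · rw [if_pos h3, hrw]
        exact key _ _ (by nlinarith)
      · rw [if_neg (not_le.mpr h3), hrw]
        exact key _ _ (by nlinarith)
  · rw [if_neg (not_le.mpr h1)]
    have h2 : ¬ y ≤ lam := not_le.mpr (lt_of_lt_of_le h1 hxy)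
    rw [if_neg h2]
    rcases le_or_gt x (a * lam) with h3 | h3
    · rw [if_pos h3]
      rcases le_or_gt y (a * lam) with h4 | h4
      · rw [if_pos h4]
      · rw [if_neg (not_le.mpr h4)]
        exact key _ _ h4.le
    · rw [if_neg (not_le.mpr h3)]
      have h4 : ¬ y ≤ a * lam := not_le.mpr (lt_of_lt_of_le h3 hxy)
      rw [if_neg h4]
      exact key _ _ hxy

private lemma scadH_convex (lam a : ℝ) (hlam : 0 < lam) (ha : 2 < a) :
    ConvexOn ℝ Set.univ (scadH lam a) := by
  have hdiff : Differentiable ℝ (scadH lam a) :=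
    fun x => (scadH_hasDerivAt lam a hlam ha x).differentiableAt
  have hderiv : deriv (scadH lam a) = scadH' lam a :=
    funext fun x => (scadH_hasDerivAt lam a hlam ha x).deriv
  refine Monotone.convexOn_univ_of_deriv hdiff ?_
  rw [hderiv]
  exact scadH'_mono lam a hlam ha

private lemma scadH_monoOn (lam a : ℝ) (hlam : 0 < lam) (ha : 2 < a) :
    MonotoneOn (scadH lam a) (Ici 0) := by
  have hb : (0 : ℝ) < a - 1 := by linarith
  have hdiff : Differentiable ℝ (scadH lam a) :=
    fun x => (scadH_hasDerivAt lam a hlam ha x).differentiableAt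
  refine monotoneOn_of_deriv_nonneg (convex_Ici 0) hdiff.continuous.continuousOn
    hdiff.differentiableOn ?_
  intro x hx
  rw [interior_Ici] at hx
  rw [(scadH_hasDerivAt lam a hlam ha x).deriv]
  have hx0 : (0 : ℝ) < x := hx
  simp only [scadH']
  split_ifs with hc1 hc2
  · positivity
  · positivity
  · positivity

/-- SCAD penalty: ρ(t) + t²/(2(a−1)) is convex, ρ is differentiable off 0,
and its derivative vanishes for t ≥ aλ. -/
theorem scad_properties (lam a : ℝ) (hlam : 0 < lam) (ha : 2 < a) (ρ : ℝ → ℝ)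
    (hρ : ∀ t, ρ t = if |t| ≤ lam then lam * |t|
      else if |t| ≤ a * lam then -(t ^ 2 - 2 * a * lam * |t| + lam ^ 2) / (2 * (a - 1))
      else (a + 1) * lam ^ 2 / 2) :
    ConvexOn ℝ Set.univ (fun t => ρ t + t ^ 2 / (2 * (a - 1))) ∧
    (∀ t ≠ (0 : ℝ), DifferentiableAt ℝ ρ t) ∧
    ∀ t, a * lam ≤ t → deriv ρ t = 0 := by
  have hb : (0 : ℝ) < a - 1 := by linarith
  have hb' : (a : ℝ) - 1 ≠ 0 := ne_of_gt hb
  have hkey : ∀ t, ρ t + t ^ 2 / (2 * (a - 1)) = scadH lam a |t| := by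
    intro t
    rw [hρ]
    have hsq : |t| ^ 2 = t ^ 2 := sq_abs t
    simp only [scadH]
    by_cases h1 : |t| ≤ lam
    · rw [if_pos h1, if_pos h1, hsq]
    · rw [if_neg h1, if_neg h1]
      by_cases h2 : |t| ≤ a * lam
      · rw [if_pos h2, if_pos h2]
        field_simp
        ring
      · rw [if_neg h2, if_neg h2, hsq]
  have hρeq : ρ = fun t => scadH lam a |t| - t ^ 2 / (2 * (a - 1)) := by
    funext t
    have h := hkey t
    linarith
  have hx2 : ∀ y : ℝ, HasDerivAt (fun x : ℝ => x ^ 2 / (2 * (a - 1))) (y / (a - 1)) y := by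
    intro y
    have h : HasDerivAt (fun x : ℝ => x ^ 2 / (2 * (a - 1))) ((↑2 * y ^ 1) / (2 * (a - 1))) y :=
      (hasDerivAt_pow 2 y).div_const _
    convert h using 1
    field_simp
  refine ⟨?_, ?_, ?_⟩
  · have heq : (fun t => ρ t + t ^ 2 / (2 * (a - 1))) = fun t => scadH lam a |t| :=
      funext hkey
    rw [heq]
    have hconv := scadH_convex lam a hlam ha
    have hmono := scadH_monoOn lam a hlam ha
    refine ⟨convex_univ, ?_⟩
    intro x _ y _ p q hp hq hpq
    simp only [smul_eq_mul]
    have htri : |p * x + q * y| ≤ p * |x| + q * |y| := by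
      calc |p * x + q * y| ≤ |p * x| + |q * y| := abs_add_le _ _
        _ = p * |x| + q * |y| := by
            rw [abs_mul, abs_mul, abs_of_nonneg hp, abs_of_nonneg hq]
    have h1 : scadH lam a |p * x + q * y| ≤ scadH lam a (p * |x| + q * |y|) :=
      hmono (mem_Ici.mpr (abs_nonneg _)) (mem_Ici.mpr (by positivity)) htri
    have h2 := hconv.2 (mem_univ |x|) (mem_univ |y|) hp hq hpq
    simp only [smul_eq_mul] at h2
    exact h1.trans h2
  · intro t ht
    rw [hρeq]
    have habs : HasDerivAt (fun x : ℝ => |x|) ((SignType.sign t : ℝ)) t := hasDerivAt_abs ht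
    have hcomp : HasDerivAt (fun x : ℝ => scadH lam a |x|)
        (scadH' lam a |t| * (SignType.sign t : ℝ)) t :=
      (scadH_hasDerivAt lam a hlam ha |t|).comp t habs
    exact (hcomp.sub (hx2 t)).differentiableAt
  · intro t ht
    have ht0 : (0 : ℝ) < t := lt_of_lt_of_le (mul_pos (by linarith) hlam) ht
    have hρd : HasDerivAt ρ (scadH' lam a t - t / (a - 1)) t := by
      have h : HasDerivAt (fun x => scadH lam a x - x ^ 2 / (2 * (a - 1)))
          (scadH' lam a t - t / (a - 1)) t :=
        (scadH_hasDerivAt lam a hlam ha t).sub (hx2 t)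
      refine h.congr_of_eventuallyEq ?_
      filter_upwards [Ioi_mem_nhds ht0] with y (hy : 0 < y)
      rw [hρeq]
      simp only [abs_of_pos hy]
    rw [hρd.deriv]
    have hlt : lam < a * lam := by nlinarith
    have hd : scadH' lam a t = t / (a - 1) := by
      simp only [scadH']
      rw [if_neg (not_le.mpr (lt_of_lt_of_le hlt ht))]
      by_cases h : t ≤ a * lam
      · rw [if_pos h, le_antisymm h ht]
      · rw [if_neg h]
    rw [hd]
    ring
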